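/- Let ω ∈ M_{m,n}(ℝ) be the partial permutation of block form ω = [[I_{r₁}, 0, 0, 0], [0, 0, I_{r₂}, 0], [0, 0, 0, 0]] with row blocks of sizes r₁, r₂, m₁ and column blocks of sizes r₁, n₁, r₂, n₂ (so m = r₁ + r₂ + m₁, n = r₁ + n₁ + r₂ + n₂). Fix Q ∈ X_ω and let U_Q ∈ O(m) be the orthogonal involution which is +1 on the column space C(Q) of Q and −1 on its orthogonal complement. Define Φ_Q: M_{m,n}(ℝ) → M_{m,n}(ℝ) by left multiplication by U_Q. Then Φ_Q maps X̄_ω into X̄_ω: for every A ∈ X_ω and all 1 ≤ p ≤ m, 1 ≤ q ≤ n, rk((U_Q A)_{[p,q]}) ≤ rk(ω_{[p,q]}). -/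

import Mathlib

/-- Upper-left `p × q` submatrix. -/
def ulSub {m n : ℕ} (A : Matrix (Fin m) (Fin n) ℝ) (p q : ℕ) (hp : p ≤ m) (hq : q ≤ n) :
    Matrix (Fin p) (Fin q) ℝ :=
  A.submatrix (Fin.castLE hp) (Fin.castLE hq)

/-- The block partial permutation `[[I_{r₁},0,0,0],[0,0,I_{r₂},0],[0,0,0,0]]`, with row
blocks of sizes `r₁, r₂, m₁` and column blocks of sizes `r₁, n₁, r₂, n₂`. -/
def omegaBlk (r₁ r₂ m₁ n₁ n₂ : ℕ) :
    Matrix (Fin (r₁ + r₂ + m₁)) (Fin (r₁ + n₁ + r₂ + n₂)) ℝ :=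
  Matrix.of fun i j =>
    if (i.val < r₁ ∧ j.val = i.val) ∨
        (r₁ ≤ i.val ∧ i.val < r₁ + r₂ ∧ j.val = i.val + n₁) then 1 else 0

/-- Membership in the regular part `X_ω` (upper-left rank equalities). -/
def memX {m n : ℕ} (ω A : Matrix (Fin m) (Fin n) ℝ) : Prop :=
  ∀ (p q : ℕ) (_ : 1 ≤ p) (_ : 1 ≤ q) (hp : p ≤ m) (hq : q ≤ n),
    (ulSub A p q hp hq).rank = (ulSub ω p q hp hq).rank

/-- The column space `C(Q)` of a matrix `Q`, as a subspace of Euclidean space. -/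
noncomputable def colSpace {m n : ℕ} (Q : Matrix (Fin m) (Fin n) ℝ) :
    Submodule ℝ (EuclideanSpace ℝ (Fin m)) :=
  Submodule.span ℝ (Set.range fun j : Fin n =>
    (show EuclideanSpace ℝ (Fin m) from WithLp.toLp 2 fun i => Q i j))

open Matrix

lemma rank_rowsub_le {m p q : ℕ} (f : Fin p → Fin m) (B : Matrix (Fin m) (Fin q) ℝ) :
    (B.submatrix f (id : Fin q → Fin q)).rank ≤ B.rank := by
  have h : (B.submatrix f (id : Fin q → Fin q)).mulVecLin
      = (LinearMap.funLeft ℝ ℝ f).comp B.mulVecLin := by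
    ext v i
    simp [Matrix.mulVecLin, Matrix.mulVec, dotProduct, LinearMap.funLeft_apply, Pi.single_apply, mul_ite, Finset.sum_ite_eq']
  rw [Matrix.rank, Matrix.rank, h, LinearMap.range_comp]
  exact Submodule.finrank_map_le _ _

lemma rank_ulSub_omega (r₁ r₂ m₁ n₁ n₂ : ℕ) {p q : ℕ}
    (hp : p ≤ r₁ + r₂ + m₁) (hq : q ≤ r₁ + n₁ + r₂ + n₂) :
    (ulSub (omegaBlk r₁ r₂ m₁ n₁ n₂) p q hp hq).rank
      = min p (min r₁ q + (min (r₁ + r₂) (q - n₁) - r₁)) := by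
  set M := ulSub (omegaBlk r₁ r₂ m₁ n₁ n₂) p q hp hq with hMdef
  set k := min p (min r₁ q + (min (r₁ + r₂) (q - n₁) - r₁)) with hkdef
  have hkp : k ≤ p := min_le_left _ _
  have hM : ∀ (i : Fin p) (j : Fin q),
      M i j = if (i.val < r₁ ∧ j.val = i.val) ∨
          (r₁ ≤ i.val ∧ i.val < r₁ + r₂ ∧ j.val = i.val + n₁) then (1:ℝ) else 0 := by
    intro i j; rfl
  set g : Fin k → (Fin p → ℝ) := fun i => Pi.single (Fin.castLE hkp i) 1 with hgdef
  have hcol : ∀ j : Fin q, Mᵀ j ∈ insert (0 : Fin p → ℝ) (Set.range g) := by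
    intro j
    by_cases hc : (j.val < r₁ ∧ j.val < p) ∨
        (r₁ + n₁ ≤ j.val ∧ j.val < r₁ + n₁ + r₂ ∧ j.val - n₁ < p)
    · right
      -- the row index
      have hiv : ∃ iv : ℕ, iv < p ∧ iv < k ∧
          ((iv < r₁ ∧ j.val = iv) ∨ (r₁ ≤ iv ∧ iv < r₁ + r₂ ∧ j.val = iv + n₁)) := by
        rcases hc with ⟨h1, h2⟩ | ⟨h1, h2, h3⟩
        · exact ⟨j.val, h2, by omega, Or.inl ⟨h1, rfl⟩⟩
        · exact ⟨j.val - n₁, h3, by omega, Or.inr ⟨by omega, by omega, by omega⟩⟩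
      obtain ⟨iv, hiv1, hiv2, hiv3⟩ := hiv
      refine ⟨⟨iv, hiv2⟩, ?_⟩
      funext i'
      rw [hgdef]
      simp only [Pi.single_apply]
      rw [Matrix.transpose_apply, hM]
      by_cases hii : i' = Fin.castLE hkp ⟨iv, hiv2⟩
      · rw [if_pos hii]
        have : i'.val = iv := by rw [hii]; rfl
        rw [if_pos (by omega)]
      · rw [if_neg hii, if_neg ?_]
        intro hcond
        apply hii
        apply Fin.ext
        show i'.val = iv
        omega
    · left
      funext i'
      rw [Matrix.transpose_apply, hM, if_neg ?_]
      · rfl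
      intro hcond
      apply hc
      have : i'.val < p := i'.isLt
      rcases hcond with ⟨h1, h2⟩ | ⟨h1, h2, h3⟩
      · left; omega
      · right; omega
  have hrev : ∀ i : Fin k, ∃ j : Fin q, Mᵀ j = g i := by
    intro i
    have hik : i.val < k := i.isLt
    have hip : i.val < p := lt_of_lt_of_le hik hkp
    have hjv : ∃ jv : ℕ, jv < q ∧
        ((i.val < r₁ ∧ jv = i.val) ∨ (r₁ ≤ i.val ∧ i.val < r₁ + r₂ ∧ jv = i.val + n₁)) := by
      by_cases h1 : i.val < r₁
      · exact ⟨i.val, by omega, Or.inl ⟨h1, rfl⟩⟩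
      · exact ⟨i.val + n₁, by omega, Or.inr ⟨by omega, by omega, rfl⟩⟩
    obtain ⟨jv, hjv1, hjv2⟩ := hjv
    refine ⟨⟨jv, hjv1⟩, ?_⟩
    have hje : ((⟨jv, hjv1⟩ : Fin q)).val = jv := rfl
    funext i'
    rw [hgdef]
    simp only [Pi.single_apply]
    rw [Matrix.transpose_apply, hM]
    by_cases hii : i' = Fin.castLE hkp i
    · rw [if_pos hii]
      have : i'.val = i.val := by rw [hii]; rfl
      rw [if_pos (by omega)]
    · rw [if_neg hii, if_neg ?_]
      intro hcond
      apply hii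
      apply Fin.ext
      show i'.val = i.val
      omega
  have hspan : Submodule.span ℝ (Set.range Mᵀ) = Submodule.span ℝ (Set.range g) := by
    apply le_antisymm
    · rw [Submodule.span_le]
      rintro _ ⟨j, rfl⟩
      rcases hcol j with h0 | hg
      · rw [h0]; exact Submodule.zero_mem _
      · exact Submodule.subset_span hg
    · rw [Submodule.span_le]
      rintro _ ⟨i, rfl⟩
      obtain ⟨j, hj⟩ := hrev i
      rw [← hj]
      exact Submodule.subset_span ⟨j, rfl⟩
  have hli : LinearIndependent ℝ g := by
    have : g = (Pi.basisFun ℝ (Fin p)) ∘ (Fin.castLE hkp) := by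
      funext i; rw [hgdef]; simp [Pi.basisFun_apply]
    rw [this]
    exact (Pi.basisFun ℝ (Fin p)).linearIndependent.comp _ (Fin.castLE_injective hkp)
  rw [Matrix.rank_eq_finrank_span_cols, show M.col = Mᵀ from rfl, hspan, finrank_span_eq_card hli, Fintype.card_fin]



/-- Lemma 5.5: left multiplication by the reflection `U_Q` through the
column space of `Q ∈ X_ω` maps `X_ω` into `X̄_ω`. -/
theorem reflection_maps_into_Xbar (r₁ r₂ m₁ n₁ n₂ : ℕ)
    (Q : Matrix (Fin (r₁ + r₂ + m₁)) (Fin (r₁ + n₁ + r₂ + n₂)) ℝ)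
    (hQ : memX (omegaBlk r₁ r₂ m₁ n₁ n₂) Q)
    (U : Matrix (Fin (r₁ + r₂ + m₁)) (Fin (r₁ + r₂ + m₁)) ℝ)
    (hU1 : ∀ v : EuclideanSpace ℝ (Fin (r₁ + r₂ + m₁)), v ∈ colSpace Q →
      U.mulVec (fun i => v i) = fun i => v i)
    (hU2 : ∀ v : EuclideanSpace ℝ (Fin (r₁ + r₂ + m₁)), v ∈ (colSpace Q)ᗮ →
      U.mulVec (fun i => v i) = fun i => -(v i)) :
    ∀ A, memX (omegaBlk r₁ r₂ m₁ n₁ n₂) A →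
      ∀ (p q : ℕ) (_ : 1 ≤ p) (_ : 1 ≤ q)
        (hp : p ≤ r₁ + r₂ + m₁) (hq : q ≤ r₁ + n₁ + r₂ + n₂),
        (ulSub (U * A) p q hp hq).rank ≤
          (ulSub (omegaBlk r₁ r₂ m₁ n₁ n₂) p q hp hq).rank := by
  intro A hA p q hp1 hq1 hp hq
  have hm1 : 1 ≤ r₁ + r₂ + m₁ := le_trans hp1 hp
  have h0 : (ulSub (U * A) p q hp hq).rank ≤ p := by
    simpa using Matrix.rank_le_height (ulSub (U * A) p q hp hq)
  have h1 : (ulSub (U * A) p q hp hq).rank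
      ≤ (ulSub (U * A) (r₁ + r₂ + m₁) q le_rfl hq).rank := by
    have e : ulSub (U * A) p q hp hq
        = (ulSub (U * A) (r₁ + r₂ + m₁) q le_rfl hq).submatrix (Fin.castLE hp) id := rfl
    rw [e]
    exact rank_rowsub_le _ _
  have h2 : ulSub (U * A) (r₁ + r₂ + m₁) q le_rfl hq
      = U * ulSub A (r₁ + r₂ + m₁) q le_rfl hq := rfl
  have h3 : (U * ulSub A (r₁ + r₂ + m₁) q le_rfl hq).rank
      ≤ (ulSub A (r₁ + r₂ + m₁) q le_rfl hq).rank := Matrix.rank_mul_le_right _ _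
  have h4 := hA (r₁ + r₂ + m₁) q hm1 hq1 le_rfl hq
  rw [rank_ulSub_omega] at h4
  rw [rank_ulSub_omega]
  rw [h2] at h1
  omega
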